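/- For λ > 0, define f(λ) = Σ_{i=2}^{⌊λ/2⌋} (2(i - λ/2)(λ/2)/(i(i-1)))·e^{-λ}λ^i/i!. Then f(λ) → 0 as λ → ∞. -/

import Mathlib

open Filter Real Finset

theorem stmt_15 :
    Filter.Tendsto
      (fun lam : ℝ => ∑ i ∈ Finset.Icc 2 ⌊lam / 2⌋₊,
        (2 * ((i : ℝ) - lam / 2) * (lam / 2) / (i * ((i : ℝ) - 1))) *
          (Real.exp (-lam) * lam ^ i / (Nat.factorial i)))
      Filter.atTop (nhds 0) := by
  have hc : (0:ℝ) < (1 - Real.log 2)/2 := by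
    have h2 : Real.log 2 < 1 := by
      have := Real.log_two_lt_d9
      norm_num at this ⊢; linarith
    linarith
  set c := (1 - Real.log 2)/2 with hcdef
  have hg : Tendsto (fun lam : ℝ => (lam^2/4) * Real.exp (-(c*lam))) atTop (nhds 0) := by
    have h1 : Tendsto (fun x : ℝ => x^2 * Real.exp (-x)) atTop (nhds 0) :=
      Real.tendsto_pow_mul_exp_neg_atTop_nhds_zero 2
    have h2 : Tendsto (fun lam : ℝ => c * lam) atTop atTop :=
      Tendsto.const_mul_atTop hc tendsto_id
    have h4 : Tendsto (fun lam : ℝ => (1/(4*c^2)) * ((c*lam)^2 * Real.exp (-(c*lam))))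
        atTop (nhds 0) := by
      have h5 := (h1.comp h2).const_mul (1/(4*c^2))
      rw [mul_zero] at h5
      exact h5
    refine h4.congr (fun lam => ?_)
    have hc' : c ≠ 0 := ne_of_gt hc
    field_simp
  apply squeeze_zero_norm' ?_ hg
  filter_upwards [eventually_ge_atTop (0:ℝ)] with lam hlam
  have hl2 : (0:ℝ) ≤ lam / 2 := by linarith
  set n := ⌊lam / 2⌋₊ with hn
  calc ‖∑ i ∈ Finset.Icc 2 n,
        (2 * ((i : ℝ) - lam / 2) * (lam / 2) / (i * ((i : ℝ) - 1))) *
          (Real.exp (-lam) * lam ^ i / (Nat.factorial i))‖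
      ≤ ∑ i ∈ Finset.Icc 2 n, ‖(2 * ((i : ℝ) - lam / 2) * (lam / 2) / (i * ((i : ℝ) - 1))) *
          (Real.exp (-lam) * lam ^ i / (Nat.factorial i))‖ := norm_sum_le _ _
    _ ≤ ∑ i ∈ Finset.Icc 2 n,
        (lam^2/4) * (Real.exp (-lam) * (2:ℝ)^(lam/2) * ((lam/2)^i / (Nat.factorial i))) := by
        refine Finset.sum_le_sum fun i hi => ?_
        obtain ⟨hi2, hin⟩ := Finset.mem_Icc.mp hi
        have hile : (i:ℝ) ≤ lam / 2 := le_trans (Nat.cast_le.mpr hin) (Nat.floor_le hl2)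
        have hi2' : (2:ℝ) ≤ i := by exact_mod_cast hi2
        have hB : ‖Real.exp (-lam) * lam ^ i / (Nat.factorial i : ℝ)‖
            = Real.exp (-lam) * lam ^ i / (Nat.factorial i : ℝ) := by
          rw [Real.norm_eq_abs, abs_of_nonneg]
          positivity
        rw [norm_mul, hB]
        have hA : ‖2 * ((i : ℝ) - lam / 2) * (lam / 2) / (i * ((i : ℝ) - 1))‖ ≤ lam^2/4 := by
          rw [Real.norm_eq_abs, abs_div]
          have habs : |2 * ((i : ℝ) - lam / 2) * (lam / 2)| ≤ lam^2/2 := by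
            rw [abs_mul, abs_mul]
            have h1 : |(i:ℝ) - lam/2| ≤ lam/2 := by
              rw [abs_le]; constructor <;> nlinarith [Nat.cast_nonneg (α := ℝ) i]
            have : |(2:ℝ)| = 2 := by norm_num
            rw [this, abs_of_nonneg hl2]
            nlinarith
          have hden : (2:ℝ) ≤ |(i:ℝ) * ((i:ℝ) - 1)| := by
            rw [abs_of_nonneg (by nlinarith)]
            nlinarith
          calc |2 * ((i : ℝ) - lam / 2) * (lam / 2)| / |(i:ℝ) * ((i:ℝ) - 1)|
              ≤ (lam^2/2) / 2 := by
                apply div_le_div₀ (by positivity) habs (by norm_num) hden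
            _ = lam^2/4 := by ring
        have hB2 : Real.exp (-lam) * lam ^ i / (Nat.factorial i : ℝ)
            ≤ Real.exp (-lam) * (2:ℝ)^(lam/2) * ((lam/2)^i / (Nat.factorial i)) := by
          have hpow : lam ^ i ≤ (2:ℝ)^(lam/2) * (lam/2)^i := by
            have h2i : ((2:ℝ)^i : ℝ) ≤ (2:ℝ)^(lam/2) := by
              calc ((2:ℝ)^i : ℝ) = (2:ℝ)^((i:ℕ):ℝ) := by
                    rw [Real.rpow_natCast]
                _ ≤ (2:ℝ)^(lam/2) := by
                    apply Real.rpow_le_rpow_of_exponent_le (by norm_num) hile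
            calc lam ^ i = (2:ℝ)^i * (lam/2)^i := by
                  rw [← mul_pow]; ring_nf
              _ ≤ (2:ℝ)^(lam/2) * (lam/2)^i := by
                  apply mul_le_mul_of_nonneg_right h2i (by positivity)
          calc Real.exp (-lam) * lam ^ i / (Nat.factorial i : ℝ)
              ≤ Real.exp (-lam) * ((2:ℝ)^(lam/2) * (lam/2)^i) / (Nat.factorial i : ℝ) := by
                apply div_le_div_of_nonneg_right (mul_le_mul_of_nonneg_left hpow
                  (le_of_lt (Real.exp_pos _)))
                · positivity
            _ = Real.exp (-lam) * (2:ℝ)^(lam/2) * ((lam/2)^i / (Nat.factorial i)) := by ring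
        exact mul_le_mul hA hB2 (by positivity) (by positivity)
    _ = (lam^2/4) * (Real.exp (-lam) * (2:ℝ)^(lam/2)) *
          ∑ i ∈ Finset.Icc 2 n, ((lam/2)^i / (Nat.factorial i : ℝ)) := by
        rw [Finset.mul_sum]
        exact Finset.sum_congr rfl fun i _ => by ring
    _ ≤ (lam^2/4) * (Real.exp (-lam) * (2:ℝ)^(lam/2)) * Real.exp (lam/2) := by
        apply mul_le_mul_of_nonneg_left _ (by positivity)
        calc ∑ i ∈ Finset.Icc 2 n, ((lam/2)^i / (Nat.factorial i : ℝ))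
            ≤ ∑ i ∈ Finset.range (n+1), ((lam/2)^i / (Nat.factorial i : ℝ)) := by
              apply Finset.sum_le_sum_of_subset_of_nonneg
              · intro x hx
                simp only [Finset.mem_Icc] at hx
                simp only [Finset.mem_range]
                omega
              · intro i _ _
                positivity
          _ ≤ Real.exp (lam/2) := Real.sum_le_exp_of_nonneg hl2 _
    _ = (lam^2/4) * Real.exp (-(c*lam)) := by
        rw [Real.rpow_def_of_pos (by norm_num : (0:ℝ) < 2)]
        have hce : -(c*lam) = (-lam + Real.log 2 * (lam/2)) + lam/2 := by
          rw [hcdef]; ring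
        rw [hce, Real.exp_add, Real.exp_add]
        ring
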